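/- Let G be a finite group and let Pr₁ⁿ(G) = |{(g₁,…,g_n) ∈ Gⁿ : g₁g₂⋯g_n g₁⁻¹g₂⁻¹⋯g_n⁻¹ = 1}|/|G|ⁿ for n ≥ 2. Then Pr₁ⁿ(G) ≥ (n·|G:Z(G)| − n + 1)/|G:Z(G)|ⁿ, and Pr₁ⁿ(G) = 1 if and only if G is abelian. -/

import Mathlib

/-- The probability that a random `n`-tuple `(g₁, …, gₙ)` of elements of `G` satisfies
`g₁ g₂ ⋯ gₙ g₁⁻¹ g₂⁻¹ ⋯ gₙ⁻¹ = g`. -/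
noncomputable def prWord (G : Type*) [Group G] (n : ℕ) (g : G) : ℚ :=
  (Nat.card {t : Fin n → G // (List.ofFn t).prod * (List.ofFn fun i => (t i)⁻¹).prod = g} : ℚ) / (Nat.card G) ^ n

private lemma prod_map_inv_of_comm {G : Type*} [Group G] :
    ∀ (l : List G), (∀ x ∈ l, ∀ y ∈ l, Commute x y) →
      (l.map (fun x => x⁻¹)).prod = l.prod⁻¹
  | [], _ => by simp
  | a :: l, h => by
    have hl : (l.map (fun x => x⁻¹)).prod = l.prod⁻¹ :=
      prod_map_inv_of_comm l (fun x hx y hy =>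
        h x (List.mem_cons_of_mem _ hx) y (List.mem_cons_of_mem _ hy))
    have hc : Commute a l.prod :=
      Commute.list_prod_right _ _ (fun y hy =>
        h a List.mem_cons_self y (List.mem_cons_of_mem _ hy))
    simp only [List.map_cons, List.prod_cons, hl, mul_inv_rev]
    exact hc.inv_inv.eq

private lemma word_eq_one {G : Type*} [Group G] {n : ℕ} (t : Fin n → G)
    (h : ∀ x ∈ List.ofFn t, ∀ y ∈ List.ofFn t, Commute x y) :
    (List.ofFn t).prod * (List.ofFn fun i => (t i)⁻¹).prod = 1 := by
  have : (List.ofFn fun i => (t i)⁻¹) = (List.ofFn t).map (fun x => x⁻¹) := by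
    rw [List.map_ofFn]; rfl
  rw [this, prod_map_inv_of_comm _ h, mul_inv_cancel]

theorem prWord_one_bound (G : Type*) [Group G] [Fintype G] (n : ℕ) (hn : 2 ≤ n) :
    prWord G n 1 ≥ ((n : ℚ) * ((Subgroup.center G).index : ℚ) - n + 1) /
        ((Subgroup.center G).index : ℚ) ^ n ∧
      (prWord G n 1 = 1 ↔ ∀ a b : G, a * b = b * a) := by
  classical
  obtain ⟨m, rfl⟩ : ∃ m, n = m + 2 := ⟨n - 2, by omega⟩
  set n := m + 2 with hn'
  set P : (Fin n → G) → Prop :=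
    fun t => (List.ofFn t).prod * (List.ofFn fun i => (t i)⁻¹).prod = 1 with hP
  set Sf : Finset (Fin n → G) := Finset.univ.filter P with hSf
  have hcardS : (Nat.card {t : Fin n → G // P t} : ℚ) = (Sf.card : ℚ) := by
    rw [Nat.card_eq_fintype_card, Fintype.card_subtype]
  set N := Fintype.card G with hN
  have hNcard : Nat.card G = N := Nat.card_eq_fintype_card
  set Zf : Finset G := Finset.univ.filter (· ∈ Subgroup.center G) with hZf
  set z := Zf.card with hz
  set w := Zfᶜ.card with hw
  set c := (Subgroup.center G).index with hc
  have hzw : z + w = N := Finset.card_add_card_compl _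
  have hNz : N = c * z := by
    rw [← hNcard, ← Subgroup.index_mul_card (Subgroup.center G)]
    congr 1
    rw [Nat.card_eq_fintype_card, Fintype.card_subtype]
  have hz1 : 1 ≤ z := Finset.card_pos.2 ⟨1, by simp [hZf, Subgroup.one_mem]⟩
  have hN1 : 1 ≤ N := Fintype.card_pos
  have hc1 : 1 ≤ c := by
    rcases Nat.eq_zero_or_pos c with h | h
    · rw [h, zero_mul] at hNz; omega
    · exact h
  -- the subtuples
  set B : Fin n → Finset (Fin n → G) :=
    fun i => Fintype.piFinset (fun j => if j = i then Zfᶜ else Zf) with hB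
  set A : Finset (Fin n → G) := Fintype.piFinset (fun _ => Zf) with hA
  have hmemZ : ∀ x : G, x ∈ Zf ↔ x ∈ Subgroup.center G := by
    intro x; simp [hZf]
  -- all tuples in A and B i satisfy P
  have hsat : ∀ t : Fin n → G, (∃ i : Fin n, ∀ j, j ≠ i → t j ∈ Subgroup.center G) → P t := by
    rintro t ⟨i, hi⟩
    apply word_eq_one
    intro x hx y hy
    rw [List.mem_ofFn] at hx hy
    obtain ⟨j, rfl⟩ := hx
    obtain ⟨k, rfl⟩ := hy
    rcases eq_or_ne j i with rfl | hj
    · rcases eq_or_ne k j with rfl | hk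
      · exact Commute.refl _
      · exact (Subgroup.mem_center_iff.1 (hi k hk)) (t j)
    · exact ((Subgroup.mem_center_iff.1 (hi j hj)) (t k)).symm
  have hAsub : A ⊆ Sf := by
    intro t ht
    rw [hSf, Finset.mem_filter]
    refine ⟨Finset.mem_univ _, hsat t ⟨0, fun j _ => ?_⟩⟩
    rw [hA, Fintype.mem_piFinset] at ht
    exact (hmemZ _).1 (ht j)
  have hBsub : ∀ i, B i ⊆ Sf := by
    intro i t ht
    rw [hB, Fintype.mem_piFinset] at ht
    rw [hSf, Finset.mem_filter]
    refine ⟨Finset.mem_univ _, hsat t ⟨i, fun j hj => ?_⟩⟩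
    have := ht j
    rw [if_neg hj] at this
    exact (hmemZ _).1 this
  have hBdisj : ∀ (x : Fin n), x ∈ Finset.univ → ∀ (y : Fin n), y ∈ Finset.univ → x ≠ y →
      Disjoint (B x) (B y) := by
    intro i _ j _ hij
    rw [Finset.disjoint_left]
    intro t hti htj
    rw [hB, Fintype.mem_piFinset] at hti htj
    have h1 := hti i; have h2 := htj i
    rw [if_pos rfl] at h1
    rw [if_neg hij] at h2
    exact (Finset.mem_compl.1 h1) h2
  set U : Finset (Fin n → G) := Finset.univ.biUnion B with hU
  have hAU : Disjoint A U := by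
    rw [Finset.disjoint_left]
    intro t htA htU
    rw [hU, Finset.mem_biUnion] at htU
    obtain ⟨i, _, hti⟩ := htU
    rw [hA, Fintype.mem_piFinset] at htA
    rw [hB, Fintype.mem_piFinset] at hti
    have := hti i
    rw [if_pos rfl] at this
    exact (Finset.mem_compl.1 this) (htA i)
  have hcardA : A.card = z ^ n := by
    rw [hA, Fintype.card_piFinset]
    simp [hz]
  have hcardB : ∀ i, (B i).card = w * z ^ (n - 1) := by
    intro i
    rw [hB, Fintype.card_piFinset]
    rw [← Finset.mul_prod_erase Finset.univ _ (Finset.mem_univ i)]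
    rw [if_pos rfl]
    congr 1
    rw [Finset.prod_congr rfl (fun j hj => by
      rw [if_neg (Finset.ne_of_mem_erase hj)]), Finset.prod_const,
      Finset.card_erase_of_mem (Finset.mem_univ i), Finset.card_univ, Fintype.card_fin]
  have hcardU : U.card = n * (w * z ^ (n - 1)) := by
    rw [hU, Finset.card_biUnion hBdisj]
    simp [hcardB, Finset.card_univ]
  have hSlb : z ^ n + n * (w * z ^ (n - 1)) ≤ Sf.card := by
    calc z ^ n + n * (w * z ^ (n - 1)) = (A ∪ U).card := by
          rw [Finset.card_union_of_disjoint hAU, hcardA, hcardU]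
      _ ≤ Sf.card := Finset.card_le_card (Finset.union_subset hAsub (fun t ht => by
          rw [hU, Finset.mem_biUnion] at ht
          obtain ⟨i, _, hti⟩ := ht
          exact hBsub i hti))
  have hprw : prWord G n 1 = (Sf.card : ℚ) / (N : ℚ) ^ n := by
    rw [prWord, hcardS, hNcard]
  constructor
  · -- the bound
    rw [hprw, ge_iff_le, div_le_div_iff₀ (by positivity) (by positivity)]
    have hSlbQ : ((z : ℚ) ^ n + n * (w * z ^ (n - 1))) ≤ (Sf.card : ℚ) := by
      exact_mod_cast hSlb
    have hNzQ : (N : ℚ) = c * z := by exact_mod_cast hNz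
    have hzwQ : (z : ℚ) + w = N := by exact_mod_cast hzw
    have hzn : (z : ℚ) ^ n = z ^ (n - 1) * z := by
      rw [← pow_succ, Nat.sub_add_cancel (by omega : 1 ≤ n)]
    have hwQ : (w : ℚ) = (c - 1) * z := by
      rw [hNzQ] at hzwQ; nlinarith
    have hcQ : (1 : ℚ) ≤ c := by exact_mod_cast hc1
    have hzQ : (1 : ℚ) ≤ z := by exact_mod_cast hz1
    calc ((n : ℚ) * c - n + 1) * N ^ n = ((n : ℚ) * c - n + 1) * (c ^ n * z ^ n) := by
          rw [hNzQ, mul_pow]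
      _ = ((z : ℚ) ^ n + n * (w * z ^ (n - 1))) * c ^ n := by
          rw [hwQ, hzn]; ring
      _ ≤ (Sf.card : ℚ) * c ^ n := by
          apply mul_le_mul_of_nonneg_right hSlbQ (by positivity)
  · constructor
    · -- prWord = 1 → abelian
      intro h1
      rw [hprw, div_eq_one_iff_eq (by positivity)] at h1
      have hSuniv : Sf = Finset.univ := by
        apply Finset.eq_univ_of_card
        rw [Fintype.card_fun, Fintype.card_fin, ← hN]
        exact_mod_cast h1
      intro a b
      set t : Fin n → G := fun i => if i = 0 then a else if i = 1 then b else 1 with ht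
      have hPt : P t := by
        have : t ∈ Sf := hSuniv ▸ Finset.mem_univ t
        rw [hSf, Finset.mem_filter] at this
        exact this.2
      rw [hP] at hPt
      have e1 : (List.ofFn t).prod = a * b := by
        rw [List.ofFn_succ, List.ofFn_succ, List.prod_cons, List.prod_cons]
        have h0 : t 0 = a := by rw [ht]; simp
        have h1' : t (Fin.succ 0) = b := by
          rw [ht]; simp [Fin.succ_zero_eq_one, Fin.one_eq_zero_iff]
        have hrest : (List.ofFn fun i : Fin m => t i.succ.succ).prod = 1 := by
          apply List.prod_eq_one
          intro x hx
          rw [List.mem_ofFn] at hx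
          obtain ⟨i, rfl⟩ := hx
          rw [ht]
          have h2 : i.succ.succ ≠ (0 : Fin n) := Fin.succ_ne_zero _
          have h3 : i.succ.succ ≠ (1 : Fin n) := by
            intro h
            have : i.succ.succ = Fin.succ 0 := by rw [h, Fin.succ_zero_eq_one]
            exact Fin.succ_ne_zero i (Fin.succ_injective _ this)
          simp [h2, h3]
        rw [h0, h1', hrest, mul_one]
      have e2 : (List.ofFn fun i => (t i)⁻¹).prod = a⁻¹ * b⁻¹ := by
        rw [List.ofFn_succ, List.ofFn_succ, List.prod_cons, List.prod_cons]
        have h0 : t 0 = a := by rw [ht]; simp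
        have h1' : t (Fin.succ 0) = b := by
          rw [ht]; simp [Fin.succ_zero_eq_one, Fin.one_eq_zero_iff]
        have hrest : (List.ofFn fun i : Fin m => (t i.succ.succ)⁻¹).prod = 1 := by
          apply List.prod_eq_one
          intro x hx
          rw [List.mem_ofFn] at hx
          obtain ⟨i, rfl⟩ := hx
          rw [ht]
          have h2 : i.succ.succ ≠ (0 : Fin n) := Fin.succ_ne_zero _
          have h3 : i.succ.succ ≠ (1 : Fin n) := by
            intro h
            have : i.succ.succ = Fin.succ 0 := by rw [h, Fin.succ_zero_eq_one]
            exact Fin.succ_ne_zero i (Fin.succ_injective _ this)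
          simp [h2, h3]
        rw [h0, h1', hrest, mul_one]
      rw [e1, e2] at hPt
      have hab : a * b = (a⁻¹ * b⁻¹)⁻¹ := mul_eq_one_iff_eq_inv.1 hPt
      rw [mul_inv_rev, inv_inv, inv_inv] at hab
      exact hab
    · -- abelian → prWord = 1
      intro h
      have hall : ∀ t : Fin n → G, P t := by
        intro t
        apply word_eq_one
        intro x _ y _
        exact h x y
      have : Sf = Finset.univ := by
        rw [hSf]
        apply Finset.filter_true_of_mem
        intro t _
        exact hall t
      rw [hprw, this, Finset.card_univ, Fintype.card_fun, Fintype.card_fin, ← hN]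
      rw [Nat.cast_pow, div_self (by positivity)]
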